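/- (Kubert identity for the Hurwitz zeta function) For every natural number q ≥ 1, every real number x with 0 < x ≤ 1, and every complex number s ≠ 1, q^s · ζ(s, x) = Σ_{r=0}^{q−1} ζ(s, (r + x)/q). -/

import Mathlib

open HurwitzZeta Complex Set

lemma kubert_of_one_lt_re (q : ℕ) (hq : 1 ≤ q) (x : ℝ) (hx0 : 0 < x) (hx1 : x ≤ 1)
    {s : ℂ} (hs : 1 < re s) :
    (q : ℂ) ^ s * hurwitzZeta (x : UnitAddCircle) s =
      ∑ r ∈ Finset.range q,
        hurwitzZeta ((((r : ℝ) + x) / q : ℝ) : UnitAddCircle) s := by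
  have hq0 : (0 : ℝ) < q := by exact_mod_cast hq
  haveI : NeZero q := ⟨by omega⟩
  have hL : HasSum (fun n : ℕ ↦ (q : ℂ) ^ s * (1 / (n + x : ℂ) ^ s))
      ((q : ℂ) ^ s * hurwitzZeta (x : UnitAddCircle) s) :=
    (hasSum_hurwitzZeta_of_one_lt_re ⟨hx0.le, hx1⟩ hs).mul_left _
  -- transport to Fin q × ℕ via n = q * m + r
  have hE : HasSum (fun p : Fin q × ℕ ↦ (q : ℂ) ^ s * (1 / ((q * p.2 + p.1 : ℕ) + x : ℂ) ^ s))
      ((q : ℂ) ^ s * hurwitzZeta (x : UnitAddCircle) s) := by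
    have h1 := (Nat.divModEquiv q).symm.hasSum_iff.mpr hL
    have h2 := (Equiv.prodComm (Fin q) ℕ).hasSum_iff.mpr h1
    refine h2.congr_fun fun p ↦ ?_
    simp only [Function.comp, Equiv.prodComm_apply, Prod.swap, Nat.divModEquiv,
      Equiv.coe_fn_symm_mk]
    rw [mul_comm p.2 q]
  -- fiberwise sums
  have key : ∀ r : Fin q, HasSum (fun m : ℕ ↦ (q : ℂ) ^ s *
      (1 / ((q * m + r : ℕ) + x : ℂ) ^ s))
      (hurwitzZeta ((((r : ℝ) + x) / q : ℝ) : UnitAddCircle) s) := by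
    intro r
    have hmem : ((r : ℝ) + x) / q ∈ Icc (0 : ℝ) 1 := by
      constructor
      · positivity
      · rw [div_le_one hq0]
        have h1 : (r : ℕ) + 1 ≤ q := r.2
        have h2 : ((r : ℕ) : ℝ) + 1 ≤ (q : ℝ) := by exact_mod_cast h1
        linarith
    refine (hasSum_hurwitzZeta_of_one_lt_re hmem hs).congr_fun fun m ↦ ?_
    have hb : (0 : ℝ) ≤ (m : ℝ) + ((r : ℝ) + x) / q := by positivity
    have hqr : ((q * m + r : ℕ) + x : ℂ) = ((q : ℝ) * ((m : ℝ) + ((r : ℝ) + x) / q) : ℝ) := by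
      rw [show ((q : ℝ) * ((m : ℝ) + ((r : ℝ) + x) / q)) = q * m + r + x by
        field_simp; ring]
      push_cast
      ring
    have hqs : ((q : ℝ) : ℂ) ^ s ≠ 0 := by
      rw [Ne, cpow_eq_zero_iff]
      push_neg
      intro h
      exact absurd h (by exact_mod_cast hq0.ne')
    rw [hqr, ofReal_mul, mul_cpow_ofReal_nonneg hq0.le hb, one_div, mul_inv, ← mul_assoc,
      ofReal_natCast, mul_inv_cancel₀ (ofReal_natCast q ▸ hqs), one_mul, one_div,
      ofReal_add, ofReal_natCast]
  have hfib := hE.prod_fiberwise key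
  rw [← Fin.sum_univ_eq_sum_range (fun r ↦
    hurwitzZeta ((((r : ℝ) + x) / q : ℝ) : UnitAddCircle) s) q,
    ← hfib.tsum_eq, tsum_fintype]

theorem hurwitzZeta_kubert (q : ℕ) (hq : 1 ≤ q) (x : ℝ) (hx0 : 0 < x) (hx1 : x ≤ 1)
    (s : ℂ) (hs : s ≠ 1) :
    (q : ℂ) ^ s * hurwitzZeta (x : UnitAddCircle) s =
      ∑ r ∈ Finset.range q,
        hurwitzZeta ((((r : ℝ) + x) / q : ℝ) : UnitAddCircle) s := by
  have hq0 : (q : ℂ) ≠ 0 := by exact Nat.cast_ne_zero.mpr (by omega)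
  set U : Set ℂ := {1}ᶜ with hU
  have hUo : IsOpen U := isOpen_compl_singleton
  have hF : AnalyticOnNhd ℂ (fun z ↦ (q : ℂ) ^ z * hurwitzZeta (x : UnitAddCircle) z) U := by
    apply DifferentiableOn.analyticOnNhd _ hUo
    intro z hz
    exact ((differentiableAt_id.const_cpow (Or.inl hq0)).mul
      (differentiableAt_hurwitzZeta _ hz)).differentiableWithinAt
  have hG : AnalyticOnNhd ℂ (fun z ↦ ∑ r ∈ Finset.range q,
      hurwitzZeta ((((r : ℝ) + x) / q : ℝ) : UnitAddCircle) z) U := by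
    apply DifferentiableOn.analyticOnNhd _ hUo
    intro z hz
    exact (DifferentiableAt.fun_sum fun r _ ↦
      differentiableAt_hurwitzZeta _ hz).differentiableWithinAt
  have hconn : IsPreconnected U := by
    refine (isConnected_compl_singleton_of_one_lt_rank ?_ (1 : ℂ)).isPreconnected
    rw [Complex.rank_real_complex]
    norm_num
  have h2 : (2 : ℂ) ∈ U := by norm_num [hU]
  have hev : (fun z ↦ (q : ℂ) ^ z * hurwitzZeta (x : UnitAddCircle) z) =ᶠ[nhds 2]
      (fun z ↦ ∑ r ∈ Finset.range q,
        hurwitzZeta ((((r : ℝ) + x) / q : ℝ) : UnitAddCircle) z) := by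
    have hopen : IsOpen {z : ℂ | 1 < re z} := isOpen_lt continuous_const continuous_re
    refine Filter.eventuallyEq_of_mem (hopen.mem_nhds (by norm_num)) fun z hz ↦ ?_
    exact kubert_of_one_lt_re q hq x hx0 hx1 hz
  exact hF.eqOn_of_preconnected_of_eventuallyEq hG hconn h2 hev hs
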